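/- Let R be a probability measure on a product space X × Y with reference coupling structure, and let π* be a probability measure with dπ*/dR(x,y) = f(x)g(y)/Z for measurable positive f, g and normalization Z. Then for any probability measure π with the same two marginals as π* and π ≪ R, KL(π‖R) − KL(π*‖R) = KL(π‖π*) ≥ 0. In particular π* is the unique minimizer of KL(·‖R) over couplings with its marginals. -/

import Mathlib

open MeasureTheory

/-- Kullback–Leibler divergence (for `μ ≪ ν` with integrable log-density). -/
noncomputable def KLdiv {Ω : Type*} [MeasurableSpace Ω] (μ ν : Measure Ω) : ℝ :=
  ∫ x, Real.log ((μ.rnDeriv ν) x).toReal ∂μ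

open Filter

private lemma clamp_add_abs_le (c s t : ℝ) (hc : 0 ≤ c) :
    |max (-c) (min s c) + max (-c) (min t c)| ≤ |s + t| := by
  rw [abs_le]
  rcases abs_cases (s + t) with ⟨h, h'⟩ | ⟨h, h'⟩ <;> rw [h] <;>
    constructor <;>
    simp only [min_def, max_def] <;> split_ifs <;> linarith

private lemma clamp_tendsto (s : ℝ) :
    Tendsto (fun n : ℕ => max (-(n : ℝ)) (min s n)) atTop (nhds s) := by
  refine tendsto_const_nhds.congr' ?_
  filter_upwards [eventually_ge_atTop ⌈|s|⌉₊] with n hn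
  have h : |s| ≤ (n : ℝ) := le_trans (Nat.le_ceil _) (Nat.cast_le.mpr hn)
  rw [abs_le] at h
  rw [min_eq_left h.2, max_eq_right h.1]

/-- If two couplings share marginals, integrals of sums `a(x)+b(y)` agree, provided the
sum is integrable w.r.t. both (no separate integrability needed, by truncation). -/
private lemma integral_sum_marginals_eq {X Y : Type*} [MeasurableSpace X] [MeasurableSpace Y]
    (π π' : Measure (X × Y)) [IsProbabilityMeasure π] [IsProbabilityMeasure π']
    (a : X → ℝ) (b : Y → ℝ) (ha : Measurable a) (hb : Measurable b)
    (hfst : π.map Prod.fst = π'.map Prod.fst) (hsnd : π.map Prod.snd = π'.map Prod.snd)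
    (h1 : Integrable (fun p => a p.1 + b p.2) π) (h2 : Integrable (fun p => a p.1 + b p.2) π') :
    ∫ p, (a p.1 + b p.2) ∂π = ∫ p, (a p.1 + b p.2) ∂π' := by
  set T : ℕ → ℝ → ℝ := fun n t => max (-(n : ℝ)) (min t n) with hTdef
  have hTmeas : ∀ n, Measurable (T n) := fun n =>
    (continuous_const.max ((continuous_id.min continuous_const))).measurable
  have hTbdd : ∀ (n : ℕ) (t : ℝ), |T n t| ≤ n := by
    intro n t
    rw [abs_le]
    exact ⟨le_max_left _ _, max_le (neg_le_self (Nat.cast_nonneg n)) (min_le_right _ _)⟩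
  have hintA : ∀ (μ : Measure (X × Y)) [IsProbabilityMeasure μ] (n : ℕ),
      Integrable (fun p : X × Y => T n (a p.1)) μ := by
    intro μ _ n
    refine Integrable.mono' (integrable_const (n : ℝ))
      (((hTmeas n).comp (ha.comp measurable_fst)).aestronglyMeasurable) ?_
    exact Filter.Eventually.of_forall fun p => hTbdd n _
  have hintB : ∀ (μ : Measure (X × Y)) [IsProbabilityMeasure μ] (n : ℕ),
      Integrable (fun p : X × Y => T n (b p.2)) μ := by
    intro μ _ n
    refine Integrable.mono' (integrable_const (n : ℝ))
      (((hTmeas n).comp (hb.comp measurable_snd)).aestronglyMeasurable) ?_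
    exact Filter.Eventually.of_forall fun p => hTbdd n _
  have hn : ∀ n : ℕ, ∫ p, (T n (a p.1) + T n (b p.2)) ∂π
      = ∫ p, (T n (a p.1) + T n (b p.2)) ∂π' := by
    intro n
    rw [integral_add (hintA π n) (hintB π n), integral_add (hintA π' n) (hintB π' n)]
    have eA : ∫ p, T n (a p.1) ∂π = ∫ p, T n (a p.1) ∂π' := by
      have e1 : ∫ p : X × Y, T n (a p.1) ∂π = ∫ x, T n (a x) ∂(π.map Prod.fst) :=
        (integral_map measurable_fst.aemeasurable
          ((hTmeas n).comp ha).aestronglyMeasurable).symm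
      have e2 : ∫ p : X × Y, T n (a p.1) ∂π' = ∫ x, T n (a x) ∂(π'.map Prod.fst) :=
        (integral_map measurable_fst.aemeasurable
          ((hTmeas n).comp ha).aestronglyMeasurable).symm
      rw [e1, e2, hfst]
    have eB : ∫ p, T n (b p.2) ∂π = ∫ p, T n (b p.2) ∂π' := by
      have e1 : ∫ p : X × Y, T n (b p.2) ∂π = ∫ y, T n (b y) ∂(π.map Prod.snd) :=
        (integral_map measurable_snd.aemeasurable
          ((hTmeas n).comp hb).aestronglyMeasurable).symm
      have e2 : ∫ p : X × Y, T n (b p.2) ∂π' = ∫ y, T n (b y) ∂(π'.map Prod.snd) :=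
        (integral_map measurable_snd.aemeasurable
          ((hTmeas n).comp hb).aestronglyMeasurable).symm
      rw [e1, e2, hsnd]
    rw [eA, eB]
  have hlim : ∀ (μ : Measure (X × Y)) [IsProbabilityMeasure μ],
      Integrable (fun p => a p.1 + b p.2) μ →
      Tendsto (fun n : ℕ => ∫ p, (T n (a p.1) + T n (b p.2)) ∂μ) atTop
        (nhds (∫ p, (a p.1 + b p.2) ∂μ)) := by
    intro μ _ hint
    refine tendsto_integral_of_dominated_convergence (fun p => |a p.1 + b p.2|)
      (fun n => ((hTmeas n).comp (ha.comp measurable_fst)).aestronglyMeasurable.add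
        ((hTmeas n).comp (hb.comp measurable_snd)).aestronglyMeasurable)
      hint.abs ?_ ?_
    · intro n
      refine Filter.Eventually.of_forall fun p => ?_
      simpa [Real.norm_eq_abs] using clamp_add_abs_le n (a p.1) (b p.2) (Nat.cast_nonneg n)
    · exact Filter.Eventually.of_forall fun p =>
        (clamp_tendsto (a p.1)).add (clamp_tendsto (b p.2))
  have t1 := hlim π h1
  have t2 := hlim π' h2
  exact tendsto_nhds_unique (t1.congr fun n => hn n) t2

/-- Gibbs' inequality with equality case, for probability measures. -/
private lemma kl_gibbs {Ω : Type*} [MeasurableSpace Ω] (μ ν : Measure Ω)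
    [IsProbabilityMeasure μ] [IsProbabilityMeasure ν] (hμν : μ ≪ ν)
    (hint : Integrable (fun x => Real.log ((μ.rnDeriv ν) x).toReal) μ) :
    0 ≤ KLdiv μ ν ∧ (KLdiv μ ν = 0 → μ = ν) := by
  set d := μ.rnDeriv ν with hd
  have hd_pos : ∀ᵐ x ∂μ, 0 < d x := Measure.rnDeriv_pos hμν
  have hd_lt : ∀ᵐ x ∂μ, d x < ⊤ := hμν.ae_le (Measure.rnDeriv_lt_top μ ν)
  set u : Ω → ℝ := fun x => ((d x)⁻¹).toReal with hu
  have hu_meas : Measurable u := (Measure.measurable_rnDeriv μ ν).inv.ennreal_toReal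
  have hlint : ∫⁻ x, (d x)⁻¹ ∂μ ≤ 1 := by
    have h := MeasureTheory.lintegral_rnDeriv_mul hμν
      ((Measure.measurable_rnDeriv μ ν).inv.aemeasurable)
    simp only [Pi.inv_apply, ← hd] at h
    rw [← h]
    calc ∫⁻ x, d x * (d x)⁻¹ ∂ν ≤ ∫⁻ _, 1 ∂ν :=
          lintegral_mono fun x => ENNReal.mul_inv_le_one (d x)
      _ = 1 := by simp
  have hu_int : Integrable u μ := by
    refine ⟨hu_meas.aestronglyMeasurable, ?_⟩
    rw [hasFiniteIntegral_iff_norm]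
    refine lt_of_le_of_lt (le_trans (lintegral_mono fun x => ?_) hlint) ENNReal.one_lt_top
    rw [Real.norm_eq_abs, abs_of_nonneg ENNReal.toReal_nonneg]
    exact ENNReal.ofReal_toReal_le
  have hu_le : ∫ x, u x ∂μ ≤ 1 := by
    rw [integral_eq_lintegral_of_nonneg_ae
      (Filter.Eventually.of_forall fun x => ENNReal.toReal_nonneg)
      hu_meas.aestronglyMeasurable]
    have h2 : ∫⁻ x, ENNReal.ofReal (u x) ∂μ ≤ 1 :=
      le_trans (lintegral_mono fun x => ENNReal.ofReal_toReal_le) hlint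
    have h3 := ENNReal.toReal_mono ENNReal.one_ne_top h2
    rwa [ENNReal.toReal_one] at h3
  have hpt : ∀ᵐ x ∂μ, 1 - u x ≤ Real.log (d x).toReal := by
    filter_upwards [hd_pos, hd_lt] with x h0 htop
    have hw : 0 < (d x).toReal := ENNReal.toReal_pos h0.ne' htop.ne
    have hux : u x = ((d x).toReal)⁻¹ := ENNReal.toReal_inv _
    have hls := Real.log_le_sub_one_of_pos (inv_pos.mpr hw)
    rw [Real.log_inv] at hls
    rw [hux]; linarith
  have h1u_int : Integrable (fun x => 1 - u x) μ := (integrable_const 1).sub hu_int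
  have hge : 1 - ∫ x, u x ∂μ ≤ ∫ x, Real.log (d x).toReal ∂μ := by
    have h3 := integral_mono_ae h1u_int hint hpt
    rwa [integral_sub (integrable_const 1) hu_int, integral_const, probReal_univ,
      smul_eq_mul, mul_one] at h3
  refine ⟨le_trans (by linarith) hge, fun h0 => ?_⟩
  have hu_eq : ∫ x, u x ∂μ = 1 := by
    refine le_antisymm hu_le ?_
    rw [KLdiv] at h0
    linarith [hge.trans_eq h0]
  have hI : ∫ x, (Real.log (d x).toReal - (1 - u x)) ∂μ = 0 := by
    rw [integral_sub hint h1u_int, integral_sub (integrable_const 1) hu_int,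
      integral_const, probReal_univ, smul_eq_mul, mul_one, hu_eq]
    rw [KLdiv] at h0
    rw [h0]; ring
  have h_nonneg : 0 ≤ᵐ[μ] fun x => Real.log (d x).toReal - (1 - u x) := by
    filter_upwards [hpt] with x hx
    simpa using sub_nonneg.mpr hx
  have hae := (integral_eq_zero_iff_of_nonneg_ae h_nonneg (hint.sub h1u_int)).mp hI
  have hd1 : d =ᵐ[μ] 1 := by
    filter_upwards [hae, hd_pos, hd_lt] with x hx h0' htop
    have hw : 0 < (d x).toReal := ENNReal.toReal_pos h0'.ne' htop.ne
    have hux : u x = ((d x).toReal)⁻¹ := ENNReal.toReal_inv _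
    have hw1 : (d x).toReal = 1 := by
      by_contra hne
      have hlt := Real.log_lt_sub_one_of_pos (inv_pos.mpr hw)
        (by simpa [inv_eq_one] using hne)
      rw [Real.log_inv] at hlt
      simp only [Pi.zero_apply] at hx
      rw [hux] at hx
      linarith [hx]
    have : d x = 1 := by
      rw [← ENNReal.ofReal_toReal htop.ne, hw1]; simp
    simpa using this
  have hinv : ν.rnDeriv μ =ᵐ[μ] 1 := by
    have h := Measure.inv_rnDeriv hμν
    filter_upwards [h, hd1] with x hx h1x
    rw [← hx]
    simp only [Pi.inv_apply]
    rw [show μ.rnDeriv ν x = d x from rfl, h1x]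
    simp
  have hle : μ ≤ ν := by
    calc μ = μ.withDensity 1 := by simp
      _ = μ.withDensity (ν.rnDeriv μ) := (withDensity_congr_ae hinv).symm
      _ ≤ ν := Measure.withDensity_rnDeriv_le ν μ
  ext s hs
  refine le_antisymm (hle s) ?_
  have hc : μ sᶜ ≤ ν sᶜ := hle sᶜ
  have h1μ : μ s + μ sᶜ = 1 := by
    rw [measure_add_measure_compl hs, measure_univ]
  have h1ν : ν s + ν sᶜ = 1 := by
    rw [measure_add_measure_compl hs, measure_univ]
  have : ν s + ν sᶜ ≤ μ s + ν sᶜ := by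
    rw [h1ν, ← h1μ]
    exact add_le_add le_rfl hc
  exact (ENNReal.add_le_add_iff_right (measure_ne_top ν sᶜ)).mp this

/-- Pythagoras identity for the static Schrödinger problem: if `π*` has a product-form
density `f(x)g(y)/Z` with respect to the reference coupling `R`, then for any coupling `π ≪ R`
with the same marginals as `π*`, `KL(π‖R) − KL(π*‖R) = KL(π‖π*) ≥ 0`; in particular `π*`
uniquely minimizes `KL(·‖R)` over such couplings. -/
theorem schrodinger_static_pythagoras
    {X Y : Type*} [MeasurableSpace X] [MeasurableSpace Y]
    (R πstar π : Measure (X × Y))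
    [IsProbabilityMeasure R] [IsProbabilityMeasure πstar] [IsProbabilityMeasure π]
    (f : X → ℝ) (g : Y → ℝ) (Z : ℝ)
    (hf : Measurable f) (hg : Measurable g)
    (hfpos : ∀ x, 0 < f x) (hgpos : ∀ y, 0 < g y) (hZ : 0 < Z)
    (hπstar : πstar = R.withDensity fun p => ENNReal.ofReal (f p.1 * g p.2 / Z))
    (hac : π ≪ R)
    (hfst : π.map Prod.fst = πstar.map Prod.fst)
    (hsnd : π.map Prod.snd = πstar.map Prod.snd)
    (hint1 : Integrable (fun p => Real.log ((π.rnDeriv R) p).toReal) π)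
    (hint2 : Integrable (fun p => Real.log ((πstar.rnDeriv R) p).toReal) πstar)
    (hint3 : Integrable (fun p => Real.log ((π.rnDeriv πstar) p).toReal) π) :
    KLdiv π R - KLdiv πstar R = KLdiv π πstar ∧
      0 ≤ KLdiv π πstar ∧
      (KLdiv π R = KLdiv πstar R → π = πstar) := by
  -- the density and its properties
  set ρ : X × Y → ENNReal := fun p => ENNReal.ofReal (f p.1 * g p.2 / Z) with hρdef
  have hρ_meas : Measurable ρ :=
    (((hf.comp measurable_fst).mul (hg.comp measurable_snd)).div_const Z).ennreal_ofReal
  have hval_pos : ∀ p : X × Y, 0 < f p.1 * g p.2 / Z :=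
    fun p => div_pos (mul_pos (hfpos p.1) (hgpos p.2)) hZ
  have hρ_ne_zero : ∀ p, ρ p ≠ 0 := fun p => by
    simp [hρdef, ENNReal.ofReal_eq_zero, not_le, hval_pos p]
  have hρ_ne_top : ∀ p, ρ p ≠ ⊤ := fun p => ENNReal.ofReal_ne_top
  -- absolute continuities
  have hstar_ac : πstar ≪ R := by
    rw [hπstar]; exact withDensity_absolutelyContinuous _ _
  have hR_star : R ≪ πstar := by
    rw [hπstar]
    exact withDensity_absolutelyContinuous' hρ_meas.aemeasurable
      (Filter.Eventually.of_forall hρ_ne_zero)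
  have hπ_star : π ≪ πstar := hac.trans hR_star
  -- density identifications
  have hd_star : πstar.rnDeriv R =ᵐ[R] ρ := by
    rw [hπstar]; exact Measure.rnDeriv_withDensity R hρ_meas
  have hd_ππstar : π.rnDeriv πstar =ᵐ[R] fun p => (ρ p)⁻¹ * π.rnDeriv R p := by
    rw [hπstar]
    exact Measure.rnDeriv_withDensity_right π R hρ_meas.aemeasurable
      (Filter.Eventually.of_forall hρ_ne_zero) (Filter.Eventually.of_forall hρ_ne_top)
  -- the log-density function, in additive form
  set a : X → ℝ := fun x => Real.log (f x) - Real.log Z with hadef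
  set b : Y → ℝ := fun y => Real.log (g y) with hbdef
  have hL : ∀ p : X × Y, Real.log (ρ p).toReal = a p.1 + b p.2 := by
    intro p
    rw [hρdef]
    simp only
    rw [ENNReal.toReal_ofReal (hval_pos p).le, div_eq_mul_inv,
      Real.log_mul (mul_pos (hfpos p.1) (hgpos p.2)).ne' (inv_ne_zero hZ.ne'),
      Real.log_mul (hfpos p.1).ne' (hgpos p.2).ne', Real.log_inv, hadef, hbdef]
    ring
  -- KL(πstar‖R) = ∫ L dπstar
  have hKLstar : KLdiv πstar R = ∫ p, (a p.1 + b p.2) ∂πstar := by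
    rw [KLdiv]
    refine integral_congr_ae ?_
    filter_upwards [hstar_ac.ae_le hd_star] with p hp
    rw [hp, hL p]
  -- pointwise decomposition of log dπ/dπstar
  have hdecomp : (fun p => Real.log ((π.rnDeriv πstar) p).toReal)
      =ᵐ[π] fun p => Real.log ((π.rnDeriv R) p).toReal - (a p.1 + b p.2) := by
    filter_upwards [hac.ae_le hd_ππstar, Measure.rnDeriv_pos hac,
      hac.ae_le (Measure.rnDeriv_lt_top π R)] with p hp h0 htop
    rw [hp]
    have hρp : (ρ p).toReal = f p.1 * g p.2 / Z := ENNReal.toReal_ofReal (hval_pos p).le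
    rw [ENNReal.toReal_mul, ENNReal.toReal_inv,
      Real.log_mul (inv_ne_zero (by rw [hρp]; exact (hval_pos p).ne'))
        (ENNReal.toReal_pos h0.ne' htop.ne).ne', Real.log_inv, ← hL p]
    ring
  -- L is integrable under π and πstar
  have hLint_π : Integrable (fun p : X × Y => a p.1 + b p.2) π := by
    have : Integrable (fun p => Real.log ((π.rnDeriv R) p).toReal
        - Real.log ((π.rnDeriv πstar) p).toReal) π := hint1.sub hint3
    refine this.congr ?_
    filter_upwards [hdecomp] with p hp
    rw [hp]; ring
  have hLint_star : Integrable (fun p : X × Y => a p.1 + b p.2) πstar := by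
    refine hint2.congr ?_
    filter_upwards [hstar_ac.ae_le hd_star] with p hp
    rw [hp, hL p]
  -- same marginals give equal integrals of L
  have hmarg : ∫ p, (a p.1 + b p.2) ∂π = ∫ p, (a p.1 + b p.2) ∂πstar :=
    integral_sum_marginals_eq π πstar a b
      ((Real.measurable_log.comp hf).sub measurable_const)
      (Real.measurable_log.comp hg) hfst hsnd hLint_π hLint_star
  -- the Pythagoras identity
  have hpyth : KLdiv π R - KLdiv πstar R = KLdiv π πstar := by
    have h1 : KLdiv π πstar = KLdiv π R - ∫ p, (a p.1 + b p.2) ∂π := by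
      rw [KLdiv, integral_congr_ae hdecomp, integral_sub hint1 hLint_π, KLdiv]
    rw [h1, hKLstar, hmarg]
  have hgibbs := kl_gibbs π πstar hπ_star hint3
  refine ⟨hpyth, hgibbs.1, fun heq => ?_⟩
  exact hgibbs.2 (by rw [← hpyth, heq, sub_self])
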